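/- arXiv:2106.09917 — 8 statements merged into one kernel-verified Lean document; each statement's English description precedes it below -/
import Mathlib

section
/- In a one-one-LQ instance, if some stable matching M_s is feasible, then M_s is a maximum-size envy-free feasible matching: every feasible envy-free matching M satisfies |M| ≤ |M_s|. -/
/-- `BetterThan pref acc o` : a fixed alternative is strictly preferred over the optional
current partner `o`. Being unmatched (`none`, i.e. ⊥) is least preferred, so any
acceptable alternative (`acc`) beats it; against `some x` we use `pref x`. -/
def BetterThan {α : Type*} (pref : α → Prop) (acc : Prop) : Option α → Prop
  | none => acc
  | some x => pref x

/-- A one-to-one matching between agents `A` and resources `B`, given by mutually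
consistent partial partner maps. -/
structure Matching (A B : Type*) where
  mA : A → Option B
  mB : B → Option A
  consistent : ∀ a b, mA a = some b ↔ mB b = some a

/-- The matching only uses mutually acceptable pairs (edges of the instance). -/
def Matching.RespectsE {A B : Type*} (E : A → B → Prop) (M : Matching A B) : Prop :=
  ∀ a b, M.mA a = some b → E a b

/-- Number of matched agents, i.e. the size of the matching. -/
noncomputable def Matching.size {A B : Type*} (M : Matching A B) : ℕ :=
  Nat.card {a : A // (M.mA a).isSome}

/-- `(a,b)` is a blocking pair for `M`: an acceptable pair not in `M` where both sides
strictly prefer each other over their current assignment. -/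
def Blocking {A B : Type*} (E : A → B → Prop) (prefA : A → B → B → Prop)
    (prefB : B → A → A → Prop) (M : Matching A B) (a : A) (b : B) : Prop :=
  E a b ∧ M.mA a ≠ some b ∧
    BetterThan (prefA a b) (E a b) (M.mA a) ∧ BetterThan (prefB b a) (E a b) (M.mB b)

/-- Stability: no blocking pair. -/
def Stable {A B : Type*} (E : A → B → Prop) (prefA : A → B → B → Prop)
    (prefB : B → A → A → Prop) (M : Matching A B) : Prop :=
  ∀ a b, ¬ Blocking E prefA prefB M a b

/-- Agent `a` has justified envy towards agent `a'`, matched to some resource `b`. -/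
def Envies {A B : Type*} (E : A → B → Prop) (prefA : A → B → B → Prop)
    (prefB : B → A → A → Prop) (M : Matching A B) (a a' : A) : Prop :=
  ∃ b, M.mA a' = some b ∧ E a b ∧ BetterThan (prefA a b) (E a b) (M.mA a) ∧ prefB b a a'

/-- Envy-freeness: no envy pair. -/
def EnvyFree {A B : Type*} (E : A → B → Prop) (prefA : A → B → B → Prop)
    (prefB : B → A → A → Prop) (M : Matching A B) : Prop :=
  ∀ a a', ¬ Envies E prefA prefB M a a'

/-- Feasibility: every lower-quota resource is matched. -/
def Feasible {A B : Type*} (lq : B → Prop) (M : Matching A B) : Prop :=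
  ∀ b, lq b → (M.mB b).isSome

/-- Relaxed stability: every agent participating in a blocking pair is matched,
and matched to a lower-quota resource. -/
def RelaxedStable {A B : Type*} (E : A → B → Prop) (prefA : A → B → B → Prop)
    (prefB : B → A → A → Prop) (lq : B → Prop) (M : Matching A B) : Prop :=
  ∀ a b, Blocking E prefA prefB M a b → ∃ b', M.mA a = some b' ∧ lq b'

/-- Strict preference lists: each vertex has an irreflexive, transitive, total order
over its neighbours, and preferences are only over neighbours. -/
structure StrictPrefs {A B : Type*} (E : A → B → Prop) (prefA : A → B → B → Prop)
    (prefB : B → A → A → Prop) : Prop where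
  irreflA : ∀ a b, ¬ prefA a b b
  transA : ∀ a b₁ b₂ b₃, prefA a b₁ b₂ → prefA a b₂ b₃ → prefA a b₁ b₃
  totalA : ∀ a b b', E a b → E a b' → b ≠ b' → prefA a b b' ∨ prefA a b' b
  memA : ∀ a b b', prefA a b b' → E a b ∧ E a b'
  irreflB : ∀ b a, ¬ prefB b a a
  transB : ∀ b a₁ a₂ a₃, prefB b a₁ a₂ → prefB b a₂ a₃ → prefB b a₁ a₃
  totalB : ∀ b a a', E a b → E a' b → a ≠ a' → prefB b a a' ∨ prefB b a' a
  memB : ∀ b a a', prefB b a a' → E a b ∧ E a' b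

/-- if a stable matching is feasible, then it is a maximum-size
feasible envy-free matching. -/
theorem feasible_stable_is_max_envyFree {A B : Type*} [Fintype A] (E : A → B → Prop)
    (prefA : A → B → B → Prop) (prefB : B → A → A → Prop) (lq : B → Prop)
    (Ms M : Matching A B) (hsp : StrictPrefs E prefA prefB)
    (hMs : Ms.RespectsE E) (hstable : Stable E prefA prefB Ms)
    (hMsFeas : Feasible lq Ms)
    (hM : M.RespectsE E) (hMFeas : Feasible lq M) (hef : EnvyFree E prefA prefB M) :
    M.size ≤ Ms.size := by
  classical
  set S : Set A := {a | ∃ b, M.mA a = some b ∧ BetterThan (prefA a b) (E a b) (Ms.mA a)}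
    with hSdef
  have step : ∀ a ∈ S, ∃ b a', M.mA a = some b ∧ Ms.mA a' = some b ∧ a' ∈ S := by
    intro a ha
    obtain ⟨b, hab, hbet⟩ := ha
    have Eab : E a b := hM a b hab
    have hne : Ms.mA a ≠ some b := by
      intro h
      rw [h] at hbet
      exact hsp.irreflA a b hbet
    have hbetA : BetterThan (prefA a b) (E a b) (Ms.mA a) := by
      cases h : Ms.mA a with
      | none => exact Eab
      | some b' =>
        rw [h] at hbet; exact hbet
    have hnb := hstable a b
    have hbside : ¬ BetterThan (prefB b a) (E a b) (Ms.mB b) := by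
      intro hb
      exact hnb ⟨Eab, hne, hbetA, hb⟩
    obtain ⟨a', ha'⟩ : ∃ a', Ms.mB b = some a' := by
      cases h : Ms.mB b with
      | none => rw [h] at hbside; exact absurd Eab hbside
      | some a' => exact ⟨a', rfl⟩
    rw [ha'] at hbside
    have hMsa' : Ms.mA a' = some b := (Ms.consistent a' b).mpr ha'
    have Ea'b : E a' b := hMs a' b hMsa'
    have ha'ne : a' ≠ a := by
      intro h; subst h; exact hne hMsa'
    have hpref : prefB b a' a := by
      rcases hsp.totalB b a a' Eab Ea'b (Ne.symm ha'ne) with h | h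
      · exact absurd h hbside
      · exact h
    have hnenvy := hef a' a
    have hMba : M.mB b = some a := (M.consistent a b).mp hab
    have hnot : ¬ BetterThan (prefA a' b) (E a' b) (M.mA a') := by
      intro h
      exact hnenvy ⟨b, hab, Ea'b, h, hpref⟩
    obtain ⟨b', hb'⟩ : ∃ b', M.mA a' = some b' := by
      cases h : M.mA a' with
      | none => rw [h] at hnot; exact absurd Ea'b hnot
      | some b' => exact ⟨b', rfl⟩
    rw [hb'] at hnot
    have hb'ne : b' ≠ b := by
      intro h; subst h
      have := (M.consistent a' b').mp hb'
      rw [hMba] at this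
      exact ha'ne (Option.some_injective _ this).symm
    have Ea'b' : E a' b' := hM a' b' hb'
    have hpref' : prefA a' b' b := by
      rcases hsp.totalA a' b b' Ea'b Ea'b' (Ne.symm hb'ne) with h | h
      · exact absurd h hnot
      · exact h
    refine ⟨b, a', hab, hMsa', ⟨b', hb', ?_⟩⟩
    rw [hMsa']
    exact hpref'
  let f : S → S := fun x =>
    ⟨(step x x.2).choose_spec.choose,
      ((step x x.2).choose_spec.choose_spec).2.2⟩
  have hf : ∀ x : S, M.mA x = some (step x x.2).choose ∧
      Ms.mA (f x : A) = some (step x x.2).choose := by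
    intro x
    exact ⟨((step x x.2).choose_spec.choose_spec).1,
      ((step x x.2).choose_spec.choose_spec).2.1⟩
  have finj : Function.Injective f := by
    intro x y hxy
    obtain ⟨hx1, hx2⟩ := hf x
    obtain ⟨hy1, hy2⟩ := hf y
    rw [hxy] at hx2
    rw [hy2] at hx2
    have hb : (step y y.2).choose = (step x x.2).choose := Option.some_injective _ hx2
    rw [hb] at hy1
    have := (M.consistent x (step x x.2).choose).mp hx1
    rw [(M.consistent y (step x x.2).choose).mp hy1] at this
    exact Subtype.ext (Option.some_injective _ this).symm
  have fsurj : Function.Surjective f := Finite.surjective_of_injective finj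
  have hSms : ∀ a ∈ S, (Ms.mA a).isSome := by
    intro a ha
    obtain ⟨x, hx⟩ := fsurj ⟨a, ha⟩
    have := (hf x).2
    rw [hx] at this
    simp [this]
  have hsub : {a : A | (M.mA a).isSome} ⊆ {a : A | (Ms.mA a).isSome} := by
    intro a ha
    obtain ⟨b, hb⟩ := Option.isSome_iff_exists.mp ha
    by_contra hno
    have hnone : Ms.mA a = none := by
      cases h : Ms.mA a with
      | none => rfl
      | some _ => exact absurd (by simp [h]) hno
    have haS : a ∈ S := ⟨b, hb, by rw [hnone]; exact hM a b hb⟩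
    exact hno (hSms a haS)
  have h1 : M.size = ({a : A | (M.mA a).isSome} : Set A).ncard := by
    rw [Matching.size, ← Nat.card_coe_set_eq]
    rfl
  have h2 : Ms.size = ({a : A | (Ms.mA a).isSome} : Set A).ncard := by
    rw [Matching.size, ← Nat.card_coe_set_eq]
    rfl
  rw [h1, h2]
  exact Set.ncard_le_ncard hsub (Set.toFinite _)
end

section
/- In a one-to-one instance with a stable matching M_s of size s, for every matched resource b, the rank of M_s(b) in b's preference list is at most s. That is, fewer than s agents are strictly preferred by b over M_s(b). -/
/-- in a stable matching of size s, every matched resource has its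
partner within the first s positions of its preference list: fewer than s agents
are strictly preferred by b over its partner. -/
theorem stable_partner_rank_le_size {A B : Type*} [Fintype A] (E : A → B → Prop)
    (prefA : A → B → B → Prop) (prefB : B → A → A → Prop) (Ms : Matching A B)
    (hsp : StrictPrefs E prefA prefB)
    (hMs : Ms.RespectsE E) (hstable : Stable E prefA prefB Ms)
    (b : B) (a : A) (hab : Ms.mB b = some a) :
    Nat.card {a' : A // prefB b a' a} < Ms.size := by
  classical
  -- every agent preferred by b over a is matched (else blocking pair)
  have hmatched : ∀ a' : A, prefB b a' a → (Ms.mA a').isSome := by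
    intro a' hp
    by_contra h
    have hnone : Ms.mA a' = none := by
      cases h' : Ms.mA a' with
      | none => rfl
      | some x => rw [h'] at h; simp at h
    have hE : E a' b := (hsp.memB b a' a hp).1
    exact hstable a' b ⟨hE, by simp [hnone], by simp [BetterThan, hnone, hE],
      by simp [BetterThan, hab, hp]⟩
  have hne : ∀ a' : A, prefB b a' a → a' ≠ a := by
    intro a' hp he; exact hsp.irreflB b a (he ▸ hp)
  have haM : (Ms.mA a).isSome := by
    rw [(Ms.consistent a b).2 hab]; rfl
  have h1 : Nat.card {a' : A // prefB b a' a}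
      = (Finset.univ.filter (fun x : A => prefB b x a)).card := by
    rw [Nat.card_eq_fintype_card, Fintype.card_subtype]
  have h2 : Ms.size = (Finset.univ.filter (fun x : A => (Ms.mA x).isSome)).card := by
    rw [Matching.size, Nat.card_eq_fintype_card, Fintype.card_subtype]
  rw [h1, h2]
  apply Finset.card_lt_card
  constructor
  · intro x hx
    simp only [Finset.mem_filter, Finset.mem_univ, true_and] at hx ⊢
    exact hmatched x hx
  · intro hsub
    have := hsub (by simp [haM] : a ∈ Finset.univ.filter (fun x : A => (Ms.mA x).isSome))
    simp at this
    exact hsp.irreflB b a this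
end

section
/- In a one-to-one instance, suppose M_s is a stable matching and (a,b) ∈ M_s. If agent a has at least 2|M_s|+1 neighbors, then (a,b) is among a's |M_s|·2+1 most-preferred edges. More precisely: the edge (a,b) ∈ M_s cannot have more than 2|M_s| resources that a strictly prefers over b; in fact b is among a's top 2|M_s|+1 choices. -/
/-- for an edge (a,b) of a stable matching M_s, at most |M_s| resources
are strictly preferred by a over its stable partner b (so b is among a's top
2|M_s|+1, indeed top |M_s|+1, choices). -/
theorem stable_partner_among_top {A B : Type*} [Fintype A] [Fintype B]
    (E : A → B → Prop) (prefA : A → B → B → Prop) (prefB : B → A → A → Prop)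
    (Ms : Matching A B) (hsp : StrictPrefs E prefA prefB)
    (hMs : Ms.RespectsE E) (hstable : Stable E prefA prefB Ms)
    (a : A) (b : B) (hab : Ms.mA a = some b) :
    Nat.card {b' : B // prefA a b' b} ≤ Ms.size := by
  classical
  have hmatched : ∀ b' : B, prefA a b' b → (Ms.mB b').isSome := by
    intro b' hp
    by_contra hnone
    have hE : E a b' := (hsp.memA a b' b hp).1
    have hb'ne : b' ≠ b := fun h => hsp.irreflA a b (h ▸ hp)
    have hmb : Ms.mB b' = none := Option.not_isSome_iff_eq_none.mp hnone
    apply hstable a b'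
    refine ⟨hE, ?_, ?_, ?_⟩
    · rw [hab]; exact fun h => hb'ne (Option.some_injective _ h).symm
    · rw [hab]; exact hp
    · rw [hmb]; exact hE
  have : Function.Injective (fun b' : {b' : B // prefA a b' b} =>
      (⟨(Ms.mB b'.1).get (hmatched b'.1 b'.2), by
        have h1 : Ms.mB b'.1 = some ((Ms.mB b'.1).get (hmatched b'.1 b'.2)) := by
          simp
        have := (Ms.consistent _ _).mpr h1
        simp [this]⟩ : {a : A // (Ms.mA a).isSome})) := by
    intro x y hxy
    simp only [Subtype.mk.injEq] at hxy
    have hx1 : Ms.mB x.1 = some ((Ms.mB x.1).get (hmatched x.1 x.2)) := by simp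
    have hy1 : Ms.mB y.1 = some ((Ms.mB y.1).get (hmatched y.1 y.2)) := by simp
    have hx2 := (Ms.consistent _ _).mpr hx1
    have hy2 := (Ms.consistent _ _).mpr hy1
    rw [hxy] at hx2
    have := hx2.symm.trans hy2
    exact Subtype.ext (Option.some_injective _ this)
  exact Nat.card_le_card_of_injective _ this
end

section
/- In a one-one-LQ instance where the number of LQ resources q exceeds the size s of a stable matching (q > s), the instance admits no feasible envy-free matching. -/
/-- Auxiliary: agent `x` is matched in `M` and strictly prefers its `M`-partner to its
`Ms`-assignment (being unmatched in `Ms` also counts). -/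
def GoodAux {A B : Type*} (prefA : A → B → B → Prop) (Ms M : Matching A B) (x : A) : Prop :=
  ∃ b, M.mA x = some b ∧ (Ms.mA x = none ∨ ∃ c, Ms.mA x = some c ∧ prefA x b c)

/-- Auxiliary: `y`'s `Ms`-partner is `x`'s `M`-partner. -/
def LinkAux {A B : Type*} (Ms M : Matching A B) (x y : A) : Prop :=
  ∃ b, M.mA x = some b ∧ Ms.mA y = some b

lemma stepAux {A B : Type*} (E : A → B → Prop) (prefA : A → B → B → Prop)
    (prefB : B → A → A → Prop) (Ms M : Matching A B) (hsp : StrictPrefs E prefA prefB)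
    (hMs : Ms.RespectsE E) (hstable : Stable E prefA prefB Ms)
    (hME : M.RespectsE E) (hEF : EnvyFree E prefA prefB M) :
    ∀ x, GoodAux prefA Ms M x → ∃ y, GoodAux prefA Ms M y ∧ LinkAux Ms M x y := by
  rintro x ⟨b, hxb, hx⟩
  have hExb : E x b := hME x b hxb
  have hne : Ms.mA x ≠ some b := by
    rcases hx with h | ⟨c, hc, hpref⟩
    · simp [h]
    · rw [hc]; intro h; injection h with h'; subst h'
      exact hsp.irreflA x _ hpref
  have hbetterA : BetterThan (prefA x b) (E x b) (Ms.mA x) := by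
    rcases hx with h | ⟨c, hc, hpref⟩
    · rw [h]; exact hExb
    · rw [hc]; exact hpref
  have hnotB : ¬ BetterThan (prefB b x) (E x b) (Ms.mB b) := by
    intro h; exact hstable x b ⟨hExb, hne, hbetterA, h⟩
  obtain ⟨y, hy⟩ : ∃ y, Ms.mB b = some y := by
    cases h : Ms.mB b with
    | none => exact absurd (show BetterThan (prefB b x) (E x b) (Ms.mB b) by
        rw [h]; exact hExb) hnotB
    | some y => exact ⟨y, rfl⟩
  have hMsy : Ms.mA y = some b := (Ms.consistent y b).mpr hy
  have hEyb : E y b := hMs y b hMsy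
  have hyx : y ≠ x := fun h => hne (h ▸ hMsy)
  have hprefyx : prefB b y x := by
    rcases hsp.totalB b x y hExb hEyb (Ne.symm hyx) with h | h
    · exact absurd (show BetterThan (prefB b x) (E x b) (Ms.mB b) by
        rw [hy]; exact h) hnotB
    · exact h
  have hnotBA : ¬ BetterThan (prefA y b) (E y b) (M.mA y) := by
    intro h; exact hEF y x ⟨b, hxb, hEyb, h, hprefyx⟩
  obtain ⟨b', hb'⟩ : ∃ b', M.mA y = some b' := by
    cases h : M.mA y with
    | none => exact absurd (show BetterThan (prefA y b) (E y b) (M.mA y) by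
        rw [h]; exact hEyb) hnotBA
    | some b' => exact ⟨b', rfl⟩
  have hb'ne : b' ≠ b := by
    intro h; subst h
    have h1 := (M.consistent y b').mp hb'
    have h2 := (M.consistent x b').mp hxb
    rw [h1] at h2
    injection h2 with h2
    exact hyx h2
  have hEyb' : E y b' := hME y b' hb'
  have hpref' : prefA y b' b := by
    rcases hsp.totalA y b b' hEyb hEyb' (Ne.symm hb'ne) with h | h
    · exact absurd (show BetterThan (prefA y b) (E y b) (M.mA y) by
        rw [hb']; exact h) hnotBA
    · exact h
  exact ⟨y, ⟨b', hb', Or.inr ⟨b, hMsy, hpref'⟩⟩, ⟨b, hxb, hMsy⟩⟩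

lemma keyAux {A B : Type*} [Fintype A] (E : A → B → Prop) (prefA : A → B → B → Prop)
    (prefB : B → A → A → Prop) (Ms M : Matching A B) (hsp : StrictPrefs E prefA prefB)
    (hMs : Ms.RespectsE E) (hstable : Stable E prefA prefB Ms)
    (hME : M.RespectsE E) (hEF : EnvyFree E prefA prefB M) :
    ∀ a, (M.mA a).isSome → (Ms.mA a).isSome := by
  classical
  intro a ha
  by_contra hns
  have hnone : Ms.mA a = none := Option.not_isSome_iff_eq_none.mp hns
  obtain ⟨b, hb⟩ := Option.isSome_iff_exists.mp ha
  have ga : GoodAux prefA Ms M a := ⟨b, hb, Or.inl hnone⟩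
  have step := stepAux E prefA prefB Ms M hsp hMs hstable hME hEF
  let f : ℕ → {x : A // GoodAux prefA Ms M x} := fun n =>
    Nat.rec (motive := fun _ => {x : A // GoodAux prefA Ms M x}) ⟨a, ga⟩
      (fun _ p => ⟨(step p.1 p.2).choose, (step p.1 p.2).choose_spec.1⟩) n
  have hlink : ∀ n, LinkAux Ms M (f n).1 (f (n+1)).1 := fun n =>
    (step (f n).1 (f n).2).choose_spec.2
  have hinj : ∀ m n, (f m).1 = (f n).1 → m = n := by
    intro m
    induction m with
    | zero =>
      intro n h
      cases n with
      | zero => rfl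
      | succ k =>
        obtain ⟨bk, _, hMs'⟩ := hlink k
        rw [← h] at hMs'
        rw [show (f 0).1 = a from rfl, hnone] at hMs'
        exact absurd hMs' (by simp)
    | succ j ih =>
      intro n h
      cases n with
      | zero =>
        obtain ⟨bj, _, hMs'⟩ := hlink j
        rw [h] at hMs'
        rw [show (f 0).1 = a from rfl, hnone] at hMs'
        exact absurd hMs' (by simp)
      | succ k =>
        obtain ⟨bj, hMj, hMsj⟩ := hlink j
        obtain ⟨bk, hMk, hMsk⟩ := hlink k
        rw [h, hMsk] at hMsj
        injection hMsj with hbb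
        subst hbb
        have h1 := (M.consistent _ _).mp hMj
        have h2 := (M.consistent _ _).mp hMk
        rw [h1] at h2
        injection h2 with h2
        have := ih k h2
        omega
  obtain ⟨m, n, hmn, he⟩ := Finite.exists_ne_map_eq_of_infinite (fun n => (f n).1)
  exact hmn (hinj m n he)

/-- if the number of lower-quota resources exceeds the size of a stable
matching, then there is no feasible envy-free matching. -/
theorem no_feasible_envyFree_of_many_lq {A B : Type*} [Fintype A] [Fintype B]
    (E : A → B → Prop) (prefA : A → B → B → Prop) (prefB : B → A → A → Prop)
    (lq : B → Prop) (Ms : Matching A B) (hsp : StrictPrefs E prefA prefB)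
    (hMs : Ms.RespectsE E) (hstable : Stable E prefA prefB Ms)
    (hq : Ms.size < Nat.card {b : B // lq b}) :
    ∀ M : Matching A B, M.RespectsE E → Feasible lq M →
      ¬ EnvyFree E prefA prefB M := by
  intro M hME hFeas hEF
  classical
  have key := keyAux E prefA prefB Ms M hsp hMs hstable hME hEF
  let g : {b : B // lq b} → {a : A // (Ms.mA a).isSome} := fun p =>
    ⟨(M.mB p.1).get (hFeas p.1 p.2), by
      apply key
      have hmb : M.mB p.1 = some ((M.mB p.1).get (hFeas p.1 p.2)) :=
        (Option.some_get _).symm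
      have := (M.consistent ((M.mB p.1).get (hFeas p.1 p.2)) p.1).mpr hmb
      rw [this]; rfl⟩
  have hg : Function.Injective g := by
    intro p q hpq
    have hp : M.mB p.1 = some ((M.mB p.1).get (hFeas p.1 p.2)) := (Option.some_get _).symm
    have hq' : M.mB q.1 = some ((M.mB q.1).get (hFeas q.1 q.2)) := (Option.some_get _).symm
    have h1 := (M.consistent ((M.mB p.1).get (hFeas p.1 p.2)) p.1).mpr hp
    have h2 := (M.consistent ((M.mB q.1).get (hFeas q.1 q.2)) q.1).mpr hq'
    have heq : ((M.mB p.1).get (hFeas p.1 p.2)) = ((M.mB q.1).get (hFeas q.1 q.2)) :=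
      congrArg Subtype.val hpq
    rw [heq] at h1
    rw [h1] at h2
    injection h2 with h2
    exact Subtype.ext h2
  have hle : Nat.card {b : B // lq b} ≤ Nat.card {a : A // (Ms.mA a).isSome} :=
    Nat.card_le_card_of_injective g hg
  have : Ms.size = Nat.card {a : A // (Ms.mA a).isSome} := rfl
  omega
end

section
/- In a one-one-LQ instance, let M' = M_e ∪ M_s where M_e saturates exactly the LQ resources and M_s is a stable matching of the subinstance H on vertices unmatched in M_e. Then any blocking pair (a,b) of M' with a unmatched in M_e must have b an LQ resource. -/
/-- with M' = M_e ∪ M_s as in Statement 14, any blocking pair (a,b) of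
M' in which a is unmatched in M_e must have b a lower-quota resource. -/
theorem union_blocking_pair_lq {A B : Type*} (E : A → B → Prop)
    (prefA : A → B → B → Prop) (prefB : B → A → A → Prop) (lq : B → Prop)
    (Me Ms M' : Matching A B) (hMe : Me.RespectsE E)
    (hsat : ∀ b, (Me.mB b).isSome ↔ lq b)
    (hMsH : Ms.RespectsE (fun a b => E a b ∧ Me.mA a = none ∧ Me.mB b = none))
    (hMsStable :
      Stable (fun a b => E a b ∧ Me.mA a = none ∧ Me.mB b = none) prefA prefB Ms)
    (hM' : ∀ a b, M'.mA a = some b ↔ (Me.mA a = some b ∨ Ms.mA a = some b)) :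
    ∀ a b, Blocking E prefA prefB M' a b → Me.mA a = none → lq b := by
  intro a b hbl haMe
  by_contra hlq
  have hbMe : Me.mB b = none := by
    cases h : Me.mB b with
    | none => rfl
    | some a' => exact absurd ((hsat b).mp (by simp [h])) hlq
  obtain ⟨hE, hne, hA, hB⟩ := hbl
  have hEH : E a b ∧ Me.mA a = none ∧ Me.mB b = none := ⟨hE, haMe, hbMe⟩
  apply hMsStable a b
  refine ⟨hEH, ?_, ?_, ?_⟩
  · intro h
    exact hne ((hM' a b).mpr (Or.inr h))
  · cases hs : Ms.mA a with
    | none => exact hEH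
    | some x =>
      have : M'.mA a = some x := (hM' a x).mpr (Or.inr hs)
      simpa [BetterThan, this] using hA
  · cases hs : Ms.mB b with
    | none => exact hEH
    | some a' =>
      have h1 : Ms.mA a' = some b := (Ms.consistent a' b).mpr hs
      have h2 : M'.mB b = some a' :=
        (M'.consistent a' b).mp ((hM' a' b).mpr (Or.inr h1))
      simpa [BetterThan, h2] using hB
end

section
/- For every w-regular graph G = (V,E) with w ≥ 1 and every k, the reduced one-one-LQ instance G' (with vertex-agents a_i, edge-agents a'_j, resource sets B_i of size deg(v_i)+1 with zero lower-quota, and k unit-lower-quota resources X, preferences as in the reduction) satisfies: G has an independent set of size k if and only if G' admits a feasible envy-free matching of size |V| + |E|. -/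
open scoped Classical

variable {V : Type*}

/-- Acceptability in the reduced instance: vertex-agent a_i accepts its resources B_i
and all of X; edge-agent a'_j accepts the resources of its two endpoints. -/
def redE (G : SimpleGraph V) (w k : ℕ) :
    (V ⊕ G.edgeSet) → ((V × Fin (w + 1)) ⊕ Fin k) → Prop
  | Sum.inl v, Sum.inl bv => bv.1 = v
  | Sum.inl _, Sum.inr _ => True
  | Sum.inr e, Sum.inl bv => bv.1 ∈ (e : Sym2 V)
  | Sum.inr _, Sum.inr _ => False

/-- Rank function encoding agents' preference lists: a_i lists B_i (in the fixed
order) then X; a'_j lists B_{j1} then B_{j2}, where the first endpoint is the one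
with smaller ordV-value. -/
noncomputable def redRankA (G : SimpleGraph V) (w k : ℕ) (ordV : V ↪ ℕ) :
    (V ⊕ G.edgeSet) → ((V × Fin (w + 1)) ⊕ Fin k) → ℕ
  | Sum.inl _, Sum.inl bv => bv.2.val
  | Sum.inl _, Sum.inr x => (w + 1) + x.val
  | Sum.inr e, Sum.inl bv =>
      if ∀ y ∈ (e : Sym2 V), ordV bv.1 ≤ ordV y then bv.2.val
      else (w + 1) + bv.2.val
  | Sum.inr _, Sum.inr _ => 0

/-- Rank function encoding resources' preference lists: b ∈ B_i lists a_i then the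
edge-agents of edges incident to v_i (in the fixed order ordE); x ∈ X lists all
vertex-agents (in the fixed order ordV). -/
noncomputable def redRankB (G : SimpleGraph V) (w k : ℕ) (ordV : V ↪ ℕ)
    (ordE : Sym2 V ↪ ℕ) : ((V × Fin (w + 1)) ⊕ Fin k) → (V ⊕ G.edgeSet) → ℕ
  | Sum.inl _, Sum.inl _ => 0
  | Sum.inl _, Sum.inr e => 1 + ordE (e : Sym2 V)
  | Sum.inr _, Sum.inl v => ordV v
  | Sum.inr _, Sum.inr _ => 0

/-- Agents' strict preferences in the reduced instance. -/
noncomputable def redPrefA (G : SimpleGraph V) (w k : ℕ) (ordV : V ↪ ℕ) :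
    (V ⊕ G.edgeSet) → ((V × Fin (w + 1)) ⊕ Fin k) →
      ((V × Fin (w + 1)) ⊕ Fin k) → Prop :=
  fun a b b' => redE G w k a b ∧ redE G w k a b' ∧
    redRankA G w k ordV a b < redRankA G w k ordV a b'

/-- Resources' strict preferences in the reduced instance. -/
noncomputable def redPrefB (G : SimpleGraph V) (w k : ℕ) (ordV : V ↪ ℕ)
    (ordE : Sym2 V ↪ ℕ) : ((V × Fin (w + 1)) ⊕ Fin k) → (V ⊕ G.edgeSet) →
      (V ⊕ G.edgeSet) → Prop :=
  fun b a a' => redE G w k a b ∧ redE G w k a' b ∧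
    redRankB G w k ordV ordE b a < redRankB G w k ordV ordE b a'

/-- Lower-quotas: exactly the X-resources have lower-quota 1. -/
def redLQ (w k : ℕ) : ((V × Fin (w + 1)) ⊕ Fin k) → Prop :=
  fun b => b.isRight


/-! ### Auxiliary machinery for the reduction proof -/

set_option linter.unusedSectionVars false

section EFAuxSym2

variable {W : Type*}

/-- The endpoint of `e` with the smaller `ordV`-value. -/
noncomputable def fstV (ordV : W ↪ ℕ) : Sym2 W → W :=
  Sym2.lift ⟨fun a b => if ordV a ≤ ordV b then a else b, by
    intro a b
    dsimp only
    rcases le_or_gt (ordV a) (ordV b) with h | h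
    · rcases le_or_gt (ordV b) (ordV a) with h' | h'
      · simp [h, h', ordV.injective (le_antisymm h' h)]
      · simp [h, not_le.mpr h']
    · simp [not_le.mpr h, h.le]⟩

/-- The endpoint of `e` with the larger `ordV`-value. -/
noncomputable def sndV (ordV : W ↪ ℕ) : Sym2 W → W :=
  Sym2.lift ⟨fun a b => if ordV a ≤ ordV b then b else a, by
    intro a b
    dsimp only
    rcases le_or_gt (ordV a) (ordV b) with h | h
    · rcases le_or_gt (ordV b) (ordV a) with h' | h'
      · simp [h, h', ordV.injective (le_antisymm h' h)]
      · simp [h, not_le.mpr h']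
    · simp [not_le.mpr h, h.le]⟩

lemma fstV_mem (ordV : W ↪ ℕ) (e : Sym2 W) : fstV ordV e ∈ e := by
  induction e using Sym2.ind with
  | _ a b =>
    simp only [fstV, Sym2.lift_mk, Sym2.mem_iff]
    split_ifs <;> simp

lemma sndV_mem (ordV : W ↪ ℕ) (e : Sym2 W) : sndV ordV e ∈ e := by
  induction e using Sym2.ind with
  | _ a b =>
    simp only [sndV, Sym2.lift_mk, Sym2.mem_iff]
    split_ifs <;> simp

lemma eq_fstV_or_sndV (ordV : W ↪ ℕ) {e : Sym2 W} {v : W} (hv : v ∈ e) :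
    v = fstV ordV e ∨ v = sndV ordV e := by
  induction e using Sym2.ind with
  | _ a b =>
    rw [Sym2.mem_iff] at hv
    simp only [fstV, sndV, Sym2.lift_mk]
    split_ifs <;> tauto

lemma ordV_fstV_le (ordV : W ↪ ℕ) {e : Sym2 W} {y : W} (hy : y ∈ e) :
    ordV (fstV ordV e) ≤ ordV y := by
  induction e using Sym2.ind with
  | _ a b =>
    rw [Sym2.mem_iff] at hy
    simp only [fstV, Sym2.lift_mk]
    rcases hy with rfl | rfl <;> split_ifs with h <;> omega

lemma cond_iff_fstV (ordV : W ↪ ℕ) {e : Sym2 W} {v : W} (hv : v ∈ e) :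
    (∀ y ∈ e, ordV v ≤ ordV y) ↔ v = fstV ordV e := by
  constructor
  · intro h
    exact ordV.injective (le_antisymm (h _ (fstV_mem ordV e)) (ordV_fstV_le ordV hv))
  · rintro rfl
    exact fun y hy => ordV_fstV_le ordV hy

lemma adj_fstV_sndV {G : SimpleGraph W} (ordV : W ↪ ℕ) {e : Sym2 W} (he : e ∈ G.edgeSet) :
    G.Adj (fstV ordV e) (sndV ordV e) := by
  induction e using Sym2.ind with
  | _ a b =>
    rw [SimpleGraph.mem_edgeSet] at he
    simp only [fstV, sndV, Sym2.lift_mk]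
    split_ifs
    · exact he
    · exact he.symm

end EFAuxSym2

section EFAuxMatching

/-- Build a `Matching` from an agent-side assignment that never reuses a resource. -/
noncomputable def mkMatching {A B : Type*} (f : A → Option B)
    (hinj : ∀ a a' b, f a = some b → f a' = some b → a = a') : Matching A B where
  mA := f
  mB := fun b => if h : ∃ a, f a = some b then some h.choose else none
  consistent := by
    intro a b
    constructor
    · intro hab
      have h : ∃ a, f a = some b := ⟨a, hab⟩
      show dite _ _ _ = _
      rw [dif_pos h, Option.some.injEq]
      exact hinj _ _ _ h.choose_spec hab
    · intro hb
      change dite _ _ _ = _ at hb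
      by_cases h : ∃ a, f a = some b
      · rw [dif_pos h, Option.some.injEq] at hb
        subst hb; exact h.choose_spec
      · rw [dif_neg h] at hb; exact absurd hb (by simp)

@[simp] lemma mkMatching_mA {A B : Type*} (f : A → Option B) (hinj) :
    (mkMatching f hinj).mA = f := rfl

lemma mkMatching_mB_isSome {A B : Type*} (f : A → Option B) (hinj) {b : B}
    (h : ∃ a, f a = some b) : ((mkMatching f hinj).mB b).isSome := by
  rw [Option.isSome_iff_exists]
  exact ⟨h.choose, ((mkMatching f hinj).consistent _ _).mp h.choose_spec⟩

end EFAuxMatching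

section EFAuxForward

variable {W : Type*} [Fintype W] [DecidableEq W] {G : SimpleGraph W} [DecidableRel G.Adj]
  (ordV : W ↪ ℕ) (ordE : Sym2 W ↪ ℕ) (S : Finset W)

/-- Target vertex of an edge-agent: the first endpoint unless it is in `S`. -/
noncomputable def tgt (e : G.edgeSet) : W :=
  if fstV ordV (e : Sym2 W) ∈ S then sndV ordV (e : Sym2 W) else fstV ordV (e : Sym2 W)

lemma tgt_mem (e : G.edgeSet) : tgt ordV S e ∈ (e : Sym2 W) := by
  rw [tgt]
  split_ifs
  · exact sndV_mem ordV _
  · exact fstV_mem ordV _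

lemma tgt_not_mem (hS : ∀ v ∈ S, ∀ u ∈ S, ¬ G.Adj v u) (e : G.edgeSet) :
    tgt ordV S e ∉ S := by
  rw [tgt]
  split_ifs with h
  · intro hsnd
    exact hS _ h _ hsnd (adj_fstV_sndV ordV e.2)
  · exact h

/-- Slot index (1-based) of an edge-agent within the resource set of its target. -/
noncomputable def slot (e : G.edgeSet) : ℕ :=
  1 + (Finset.univ.filter
    (fun e' : G.edgeSet => tgt ordV S e' = tgt ordV S e ∧
      ordE (e' : Sym2 W) < ordE (e : Sym2 W))).card

lemma slot_lt {e e' : G.edgeSet} (htgt : tgt ordV S e = tgt ordV S e')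
    (hlt : ordE (e : Sym2 W) < ordE (e' : Sym2 W)) :
    slot ordV ordE S e < slot ordV ordE S e' := by
  have hsub : (Finset.univ.filter
      (fun e'' : G.edgeSet => tgt ordV S e'' = tgt ordV S e ∧
        ordE (e'' : Sym2 W) < ordE (e : Sym2 W))) ⊂
      (Finset.univ.filter
      (fun e'' : G.edgeSet => tgt ordV S e'' = tgt ordV S e' ∧
        ordE (e'' : Sym2 W) < ordE (e' : Sym2 W))) := by
    constructor
    · intro x hx
      simp only [Finset.mem_filter] at hx ⊢
      exact ⟨Finset.mem_univ _, htgt ▸ hx.2.1, hx.2.2.trans hlt⟩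
    · intro h
      have he : e ∈ (Finset.univ.filter
          (fun e'' : G.edgeSet => tgt ordV S e'' = tgt ordV S e' ∧
            ordE (e'' : Sym2 W) < ordE (e' : Sym2 W))) := by
        simp only [Finset.mem_filter]
        exact ⟨Finset.mem_univ _, htgt, hlt⟩
      have := h he
      simp only [Finset.mem_filter] at this
      omega
  have := Finset.card_lt_card hsub
  simp only [slot]
  omega

lemma slot_inj {e e' : G.edgeSet} (htgt : tgt ordV S e = tgt ordV S e')
    (hslot : slot ordV ordE S e = slot ordV ordE S e') : e = e' := by
  by_contra hne
  have hce : (e : Sym2 W) ≠ (e' : Sym2 W) := fun h => hne (Subtype.coe_injective h)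
  rcases (ordE.injective.ne hce).lt_or_gt with h | h
  · exact absurd hslot (Nat.ne_of_lt (slot_lt ordV ordE S htgt h))
  · exact absurd hslot.symm (Nat.ne_of_lt (slot_lt ordV ordE S htgt.symm h))

lemma slot_le {w : ℕ} (hw : 1 ≤ w) (hreg : ∀ v : W, G.degree v = w) (e : G.edgeSet) :
    slot ordV ordE S e ≤ w := by
  classical
  set T := Finset.univ.filter (fun e' : G.edgeSet => tgt ordV S e' = tgt ordV S e) with hT
  have hTcard : T.card ≤ w := by
    have h1 : T.card ≤ (G.incidenceFinset (tgt ordV S e)).card := by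
      apply Finset.card_le_card_of_injOn (fun e' : G.edgeSet => (e' : Sym2 W))
      · intro e' he'
        simp only [hT, Finset.coe_filter, Finset.mem_coe, Finset.mem_filter, Set.mem_setOf_eq] at he'
        rw [Finset.mem_coe, SimpleGraph.mem_incidenceFinset]
        exact ⟨e'.2, he'.2 ▸ tgt_mem ordV S e'⟩
      · intro x _ y _ hxy
        exact Subtype.coe_injective hxy
    rwa [SimpleGraph.card_incidenceFinset_eq_degree, hreg] at h1
  have heT : e ∈ T := by simp [hT]
  have hsub : (Finset.univ.filter
      (fun e' : G.edgeSet => tgt ordV S e' = tgt ordV S e ∧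
        ordE (e' : Sym2 W) < ordE (e : Sym2 W))) ⊆ T.erase e := by
    intro x hx
    simp only [Finset.mem_filter] at hx
    refine Finset.mem_erase.mpr ⟨?_, ?_⟩
    · intro hxe
      subst hxe
      omega
    · simp only [hT, Finset.mem_filter]
      exact ⟨Finset.mem_univ _, hx.2.1⟩
  have h2 := Finset.card_le_card hsub
  rw [Finset.card_erase_of_mem heT] at h2
  have h3 : 1 ≤ T.card := Finset.card_pos.mpr ⟨e, heT⟩
  simp only [slot]
  omega

/-- Slot index as an element of `Fin (w+1)`. -/
noncomputable def slotF (w : ℕ) (e : G.edgeSet) : Fin (w + 1) :=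
  if h : slot ordV ordE S e < w + 1 then ⟨slot ordV ordE S e, h⟩ else 0

lemma slotF_val {w : ℕ} (hw : 1 ≤ w) (hreg : ∀ v : W, G.degree v = w) (e : G.edgeSet) :
    (slotF ordV ordE S w e : ℕ) = slot ordV ordE S e := by
  rw [slotF, dif_pos (Nat.lt_succ_of_le (slot_le ordV ordE S hw hreg e))]

/-- The order isomorphism between `Fin k` and the `ordV`-image of `S`. -/
noncomputable def xiso {k : ℕ} (hk : S.card = k) : Fin k ≃o (S.image ordV : Finset ℕ) :=
  Finset.orderIsoOfFin _ (by rw [Finset.card_image_of_injective _ ordV.injective, hk])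

/-- Assignment of `X`-resources to the vertices of `S`, monotone in `ordV`. -/
noncomputable def xmap {k : ℕ} (hk : S.card = k) (v : W) (hv : v ∈ S) : Fin k :=
  (xiso ordV S hk).symm ⟨ordV v, Finset.mem_image_of_mem _ hv⟩

lemma xmap_lt_iff {k : ℕ} (hk : S.card = k) {v u : W} (hv : v ∈ S) (hu : u ∈ S) :
    xmap ordV S hk v hv < xmap ordV S hk u hu ↔ ordV v < ordV u := by
  rw [xmap, xmap, OrderIso.lt_iff_lt]
  exact Subtype.mk_lt_mk

lemma xmap_inj {k : ℕ} (hk : S.card = k) {v u : W} (hv : v ∈ S) (hu : u ∈ S)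
    (h : xmap ordV S hk v hv = xmap ordV S hk u hu) : v = u := by
  by_contra hne
  rcases (ordV.injective.ne hne).lt_or_gt with hlt | hlt
  · exact absurd h (Fin.ne_of_lt ((xmap_lt_iff ordV S hk hv hu).mpr hlt))
  · exact absurd h.symm (Fin.ne_of_lt ((xmap_lt_iff ordV S hk hu hv).mpr hlt))

lemma xmap_surj {k : ℕ} (hk : S.card = k) (x : Fin k) :
    ∃ v, ∃ hv : v ∈ S, xmap ordV S hk v hv = x := by
  obtain ⟨v, hv, hvn⟩ := Finset.mem_image.mp ((xiso ordV S hk x).2)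
  refine ⟨v, hv, ?_⟩
  rw [xmap]
  have h : (⟨ordV v, Finset.mem_image_of_mem _ hv⟩ : {n // n ∈ S.image ordV}) =
      xiso ordV S hk x := Subtype.ext hvn
  rw [h, OrderIso.symm_apply_apply]

/-- The agent-side assignment for the forward direction of the reduction. -/
noncomputable def fwdA (w k : ℕ) (hk : S.card = k) :
    (W ⊕ G.edgeSet) → Option ((W × Fin (w + 1)) ⊕ Fin k)
  | Sum.inl v => if hv : v ∈ S then some (Sum.inr (xmap ordV S hk v hv))
      else some (Sum.inl (v, 0))
  | Sum.inr e => some (Sum.inl (tgt ordV S e, slotF ordV ordE S w e))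

end EFAuxForward

/-- for every w-regular graph G (w ≥ 1) and every k, G has an
independent set of size k iff the reduced one-one-LQ instance admits a feasible
envy-free matching of size |V| + |E|. -/
theorem indepSet_iff_feasible_envyFree {V : Type*} [Fintype V] [DecidableEq V]
    (G : SimpleGraph V) [DecidableRel G.Adj] (w k : ℕ) (hw : 1 ≤ w)
    (hreg : ∀ v : V, G.degree v = w) (ordV : V ↪ ℕ) (ordE : Sym2 V ↪ ℕ) :
    (∃ S : Finset V, S.card = k ∧ ∀ v ∈ S, ∀ u ∈ S, ¬ G.Adj v u) ↔
    (∃ M : Matching (V ⊕ G.edgeSet) ((V × Fin (w + 1)) ⊕ Fin k),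
      M.RespectsE (redE G w k) ∧ Feasible (redLQ w k) M ∧
      EnvyFree (redE G w k) (redPrefA G w k ordV) (redPrefB G w k ordV ordE) M ∧
      M.size = Fintype.card V + Nat.card G.edgeSet) := by
  constructor
  · -- Forward direction: independent set gives a matching
    rintro ⟨S, hk, hS⟩
    -- injectivity of the assignment
    have hinj : ∀ a a' b, fwdA ordV ordE S w k hk (G := G) a = some b →
        fwdA ordV ordE S w k hk (G := G) a' = some b → a = a' := by
      intro a a' b h h'
      cases a with
      | inl v =>
        cases a' with
        | inl v' =>
          by_cases hv : v ∈ S <;> by_cases hv' : v' ∈ S <;>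
            simp only [fwdA, dif_pos, dif_neg, hv, hv', dite_true, dite_false] at h h'
          · rw [← h, Option.some.injEq, Sum.inr.injEq] at h'
            exact congrArg Sum.inl (xmap_inj ordV S hk hv hv' h'.symm)
          · rw [← h] at h'; simp at h'
          · rw [← h] at h'; simp at h'
          · rw [← h, Option.some.injEq, Sum.inl.injEq, Prod.mk.injEq] at h'
            exact congrArg Sum.inl h'.1.symm
        | inr e' =>
          simp only [fwdA] at h h'
          by_cases hv : v ∈ S <;> simp only [hv, dite_true, dite_false] at h
          · rw [← h, Option.some.injEq] at h'; simp at h'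
          · rw [← h, Option.some.injEq, Sum.inl.injEq, Prod.mk.injEq] at h'
            have := congrArg Fin.val h'.2
            rw [slotF_val ordV ordE S hw hreg] at this
            simp only [Fin.val_zero] at this
            have h1 : 1 ≤ slot ordV ordE S e' := Nat.le_add_right 1 _
            omega
      | inr e =>
        cases a' with
        | inl v' =>
          simp only [fwdA] at h h'
          by_cases hv' : v' ∈ S <;> simp only [hv', dite_true, dite_false] at h'
          · rw [← h', Option.some.injEq] at h; simp at h
          · rw [← h', Option.some.injEq, Sum.inl.injEq, Prod.mk.injEq] at h
            have := congrArg Fin.val h.2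
            rw [slotF_val ordV ordE S hw hreg] at this
            simp only [Fin.val_zero] at this
            have h1 : 1 ≤ slot ordV ordE S e := Nat.le_add_right 1 _
            omega
        | inr e' =>
          simp only [fwdA, Option.some.injEq, Sum.inl.injEq] at h h'
          rw [← h, Sum.inl.injEq, Prod.mk.injEq] at h'
          have hv := congrArg Fin.val h'.2
          rw [slotF_val ordV ordE S hw hreg, slotF_val ordV ordE S hw hreg] at hv
          exact congrArg Sum.inr (slot_inj ordV ordE S h'.1.symm hv.symm)
    refine ⟨mkMatching (fwdA ordV ordE S w k hk) hinj, ?_, ?_, ?_, ?_⟩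
    · -- RespectsE
      intro a b hab
      rw [mkMatching_mA] at hab
      cases a with
      | inl v =>
        by_cases hv : v ∈ S <;>
          simp only [fwdA, hv, dite_true, dite_false, Option.some.injEq] at hab <;>
          subst hab
        · trivial
        · exact rfl
      | inr e =>
        simp only [fwdA, Option.some.injEq] at hab
        subst hab
        exact tgt_mem ordV S e
    · -- Feasible
      intro b hb
      cases b with
      | inl bv => simp [redLQ] at hb
      | inr x =>
        obtain ⟨v, hv, hxv⟩ := xmap_surj ordV S hk x
        exact mkMatching_mB_isSome _ hinj
          ⟨Sum.inl v, by simp only [fwdA, hv, dite_true]; rw [hxv]⟩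
    · -- EnvyFree
      rintro a a' ⟨b, hb, hE, hbet, hpb⟩
      rw [mkMatching_mA] at hb
      have hmA : (mkMatching (fwdA ordV ordE S w k hk) hinj).mA = fwdA ordV ordE S w k hk :=
        rfl
      rw [hmA] at hbet
      cases a' with
      | inl v' =>
        by_cases hv' : v' ∈ S
        · -- v' is matched to an X-resource
          simp only [fwdA, hv', dite_true, Option.some.injEq] at hb
          subst hb
          cases a with
          | inr e => exact hE
          | inl v =>
            obtain ⟨-, -, hrb⟩ := hpb
            simp only [redRankB] at hrb
            by_cases hv : v ∈ S
            · have hcur : fwdA ordV ordE S w k hk (Sum.inl v) (G := G) =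
                  some (Sum.inr (xmap ordV S hk v hv)) := by
                simp [fwdA, hv]
              rw [hcur] at hbet
              obtain ⟨-, -, hra⟩ := hbet
              simp only [redRankA] at hra
              have h1 : xmap ordV S hk v' hv' < xmap ordV S hk v hv := by
                rw [Fin.lt_def]; omega
              have h2 := (xmap_lt_iff ordV S hk hv' hv).mp h1
              omega
            · have hcur : fwdA ordV ordE S w k hk (Sum.inl v) (G := G) =
                  some (Sum.inl (v, 0)) := by
                simp [fwdA, hv]
              rw [hcur] at hbet
              obtain ⟨-, -, hra⟩ := hbet
              simp only [redRankA, Fin.val_zero] at hra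
              omega
        · -- v' is matched to (v', 0)
          simp only [fwdA, hv', dite_false, Option.some.injEq] at hb
          subst hb
          obtain ⟨-, -, hrb⟩ := hpb
          cases a with
          | inl v => simp only [redRankB] at hrb; omega
          | inr e => simp only [redRankB] at hrb; omega
      | inr e =>
        -- a' is an edge-agent matched to (tgt e, slotF e)
        simp only [fwdA, Option.some.injEq] at hb
        subst hb
        cases a with
        | inl v =>
          have htv : tgt ordV S e = v := hE
          have hv : v ∉ S := htv ▸ tgt_not_mem ordV S hS e
          have hcur : fwdA ordV ordE S w k hk (Sum.inl v) (G := G) =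
              some (Sum.inl (v, 0)) := by
            simp [fwdA, hv]
          rw [hcur] at hbet
          obtain ⟨-, -, hra⟩ := hbet
          simp only [redRankA, Fin.val_zero] at hra
          omega
        | inr e' =>
          have hue' : tgt ordV S e ∈ (e' : Sym2 V) := hE
          obtain ⟨-, -, hrb⟩ := hpb
          simp only [redRankB] at hrb
          have hcur : fwdA ordV ordE S w k hk (Sum.inr e') (G := G) =
              some (Sum.inl (tgt ordV S e', slotF ordV ordE S w e')) := rfl
          rw [hcur] at hbet
          obtain ⟨-, -, hra⟩ := hbet
          simp only [redRankA] at hra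
          rw [slotF_val ordV ordE S hw hreg, slotF_val ordV ordE S hw hreg] at hra
          have hne : fstV ordV (e' : Sym2 V) ≠ sndV ordV (e' : Sym2 V) :=
            (adj_fstV_sndV ordV e'.2).ne
          have hordelt : ordE (e' : Sym2 V) < ordE (e : Sym2 V) := by omega
          rcases eq_fstV_or_sndV ordV hue' with hu | hu
          · by_cases hfS : fstV ordV (e' : Sym2 V) ∈ S
            · exact tgt_not_mem ordV S hS e (by rw [hu]; exact hfS)
            · have htgt' : tgt ordV S e' = fstV ordV (e' : Sym2 V) := by
                simp [tgt, hfS]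
              have htt : tgt ordV S e' = tgt ordV S e := htgt'.trans hu.symm
              have hslot := slot_lt ordV ordE S htt hordelt
              rw [if_pos ((cond_iff_fstV ordV hue').mpr hu),
                if_pos ((cond_iff_fstV ordV (tgt_mem ordV S e')).mpr htgt')] at hra
              omega
          · rw [if_neg (fun hc =>
              hne (((cond_iff_fstV ordV hue').mp hc).symm.trans hu))] at hra
            by_cases hfS : fstV ordV (e' : Sym2 V) ∈ S
            · have htgt' : tgt ordV S e' = sndV ordV (e' : Sym2 V) := by
                simp [tgt, hfS]
              rw [if_neg (fun hc =>
                hne (((cond_iff_fstV ordV (tgt_mem ordV S e')).mp hc).symm.trans htgt'))] at hra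
              have htt : tgt ordV S e' = tgt ordV S e := htgt'.trans hu.symm
              have hslot := slot_lt ordV ordE S htt hordelt
              omega
            · have htgt' : tgt ordV S e' = fstV ordV (e' : Sym2 V) := by
                simp [tgt, hfS]
              rw [if_pos ((cond_iff_fstV ordV (tgt_mem ordV S e')).mpr htgt')] at hra
              have hle := slot_le ordV ordE S hw hreg e'
              omega
    · -- size
      have hall : ∀ a : V ⊕ G.edgeSet, (fwdA ordV ordE S w k hk a (G := G)).isSome := by
        intro a
        cases a with
        | inl v => by_cases hv : v ∈ S <;> simp [fwdA, hv]
        | inr e => rfl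
      rw [Matching.size]
      simp only [mkMatching_mA]
      rw [Nat.card_congr (Equiv.subtypeUnivEquiv hall), Nat.card_sum,
        Nat.card_eq_fintype_card]
  · -- Reverse direction: matching gives an independent set
    rintro ⟨M, hresp, hfeas, hEF, hsize⟩
    have hall : ∀ a, (M.mA a).isSome := by
      intro a
      by_contra ha
      have hlt : Fintype.card {x : V ⊕ G.edgeSet // (M.mA x).isSome} <
          Fintype.card (V ⊕ G.edgeSet) := Fintype.card_subtype_lt ha
      rw [Matching.size, Nat.card_eq_fintype_card] at hsize
      rw [Fintype.card_sum, hsize, Nat.card_eq_fintype_card] at hlt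
      omega
    set P : V → Prop := fun v => ∃ x : Fin k, M.mA (Sum.inl v) = some (Sum.inr x) with hP
    refine ⟨Finset.univ.filter P, ?_, ?_⟩
    · -- cardinality k
      have hbij : (Finset.univ.filter P).card = (Finset.univ : Finset (Fin k)).card := by
        apply Finset.card_bij
          (fun v hv => ((Finset.mem_filter.mp hv).2).choose)
          (fun _ _ => Finset.mem_univ _)
        · intro v hv u hu h
          have hvx := ((Finset.mem_filter.mp hv).2).choose_spec
          have hux := ((Finset.mem_filter.mp hu).2).choose_spec
          rw [h] at hvx
          have h1 := (M.consistent _ _).mp hvx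
          have h2 := (M.consistent _ _).mp hux
          rw [h1, Option.some.injEq, Sum.inl.injEq] at h2
          exact h2
        · intro x _
          have hx := hfeas (Sum.inr x) rfl
          obtain ⟨a, haq⟩ := Option.isSome_iff_exists.mp hx
          have hma : M.mA a = some (Sum.inr x) := (M.consistent a _).mpr haq
          have hred := hresp a _ hma
          cases a with
          | inr e => exact hred.elim
          | inl v =>
            have hv : v ∈ Finset.univ.filter P :=
              Finset.mem_filter.mpr ⟨Finset.mem_univ _, ⟨x, hma⟩⟩
            refine ⟨v, hv, ?_⟩
            have hspec := ((Finset.mem_filter.mp hv).2).choose_spec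
            rw [hspec, Option.some.injEq, Sum.inr.injEq] at hma
            exact hma
      rw [hbij, Finset.card_univ, Fintype.card_fin]
    · -- independence
      intro v hv u hu hadj
      have he : s(v, u) ∈ G.edgeSet := G.mem_edgeSet.mpr hadj
      obtain ⟨b, hbe⟩ := Option.isSome_iff_exists.mp (hall (Sum.inr ⟨s(v, u), he⟩))
      have hred := hresp _ _ hbe
      cases b with
      | inr x => exact hred.elim
      | inl bv =>
        obtain ⟨z, i⟩ := bv
        have hz : z ∈ Finset.univ.filter P := by
          have : z = v ∨ z = u := Sym2.mem_iff.mp hred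
          rcases this with rfl | rfl
          · exact hv
          · exact hu
        obtain ⟨x, hzx⟩ := (Finset.mem_filter.mp hz).2
        refine hEF (Sum.inl z) (Sum.inr ⟨s(v, u), he⟩)
          ⟨Sum.inl (z, i), hbe, rfl, ?_, ?_⟩
        · rw [hzx]
          refine ⟨rfl, trivial, ?_⟩
          simp only [redRankA]
          have := i.2
          omega
        · refine ⟨rfl, hred, ?_⟩
          simp only [redRankB]
          omega
end

section
/- In a one-one-LQ instance in which every stable matching is feasible, for any k with k ≤ s (s the size of a stable matching) there exists a feasible relaxed stable matching of size at least k; and no feasible relaxed stable matching has size exceeding 2s. -/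
/-- Auxiliary: if every edge of `M` touches an agent matched in `N` (on either side),
then `M.size ≤ 2 * N.size`. -/
theorem aux_size_bound {A B : Type*} [Fintype A] (M N : Matching A B)
    (key : ∀ a b, M.mA a = some b → (N.mA a).isSome ∨ (N.mB b).isSome) :
    M.size ≤ 2 * N.size := by
  classical
  have g : ∀ x : {a : A // (M.mA a).isSome}, ¬ (N.mA x.1).isSome →
      {p : A // N.mA p = M.mA x.1 ∧ (N.mA p).isSome} := by
    intro x h
    have hb : M.mA x.1 = some ((M.mA x.1).get x.2) := (Option.some_get x.2).symm
    have hsb : (N.mB ((M.mA x.1).get x.2)).isSome := (key x.1 _ hb).resolve_left h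
    have hc : N.mA ((N.mB ((M.mA x.1).get x.2)).get hsb) = some ((M.mA x.1).get x.2) :=
      (N.consistent _ _).mpr (Option.some_get hsb).symm
    exact ⟨_, hc.trans hb.symm, by rw [hc]; rfl⟩
  let f : {a : A // (M.mA a).isSome} → {a : A // (N.mA a).isSome} × Bool :=
    fun x => if h : (N.mA x.1).isSome then (⟨x.1, h⟩, true)
      else (⟨(g x h).1, (g x h).2.2⟩, false)
  have hinj : Function.Injective f := by
    intro x y hxy
    simp only [f] at hxy
    by_cases hx : (N.mA x.1).isSome <;> by_cases hy : (N.mA y.1).isSome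
    · rw [dif_pos hx, dif_pos hy] at hxy
      exact Subtype.ext (congrArg (fun p => p.1.1) hxy)
    · rw [dif_pos hx, dif_neg hy] at hxy
      exact absurd (congrArg Prod.snd hxy) (by simp)
    · rw [dif_neg hx, dif_pos hy] at hxy
      exact absurd (congrArg Prod.snd hxy) (by simp)
    · rw [dif_neg hx, dif_neg hy] at hxy
      have hxy : (g x hx).1 = (g y hy).1 := congrArg (fun p => p.1.1) hxy
      have h1 : N.mA (g x hx).1 = M.mA x.1 := (g x hx).2.1
      have h2 : N.mA (g y hy).1 = M.mA y.1 := (g y hy).2.1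
      rw [hxy, h2] at h1
      -- h1 : M.mA y.1 = M.mA x.1
      have hbx : M.mA x.1 = some ((M.mA x.1).get x.2) := (Option.some_get x.2).symm
      have hx1 : M.mB ((M.mA x.1).get x.2) = some x.1 := (M.consistent _ _).mp hbx
      have hy1 : M.mB ((M.mA x.1).get x.2) = some y.1 :=
        (M.consistent _ _).mp (h1.trans hbx)
      exact Subtype.ext (Option.some_injective _ (hx1.symm.trans hy1))
  have := Nat.card_le_card_of_injective f hinj
  rwa [Nat.card_prod, Nat.card_eq_fintype_card (α := Bool), Fintype.card_bool,
    mul_comm] at this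

/-- in an instance where every stable matching is feasible, for every
k ≤ s (s the size of a stable matching) there is a feasible relaxed stable matching
of size at least k, and every feasible relaxed stable matching has size at most 2s. -/
theorem relaxedStable_size_bounds {A B : Type*} [Fintype A] (E : A → B → Prop)
    (prefA : A → B → B → Prop) (prefB : B → A → A → Prop) (lq : B → Prop)
    (Ms : Matching A B) (hsp : StrictPrefs E prefA prefB)
    (hMs : Ms.RespectsE E) (hstable : Stable E prefA prefB Ms)
    (hfeas : ∀ N : Matching A B, N.RespectsE E → Stable E prefA prefB N →
      Feasible lq N) :
    (∀ k : ℕ, k ≤ Ms.size → ∃ M : Matching A B, M.RespectsE E ∧ Feasible lq M ∧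
      RelaxedStable E prefA prefB lq M ∧ k ≤ M.size) ∧
    (∀ M : Matching A B, M.RespectsE E → Feasible lq M →
      RelaxedStable E prefA prefB lq M → M.size ≤ 2 * Ms.size) := by
  classical
  constructor
  · intro k hk
    exact ⟨Ms, hMs, hfeas Ms hMs hstable,
      fun a b hb => absurd hb (hstable a b), hk⟩
  · intro M hME _ _
    refine aux_size_bound M Ms ?_
    intro a b hab
    by_contra h
    push_neg at h
    obtain ⟨h1', h2'⟩ := h
    have h1 : Ms.mA a = none := Option.not_isSome_iff_eq_none.mp (by simpa using h1')
    have h2 : Ms.mB b = none := Option.not_isSome_iff_eq_none.mp (by simpa using h2')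
    refine hstable a b ⟨hME a b hab, ?_, ?_, ?_⟩
    · rw [h1]; simp
    · rw [h1]; exact hME a b hab
    · rw [h2]; exact hME a b hab
end

section
/- In a one-to-one instance, let M be a matching and b an unmatched resource with threshold agent t(b) defined as the most-preferred agent a in b's list such that a is matched in M and b ≻_a M(a) (if existing). Then for any envy-free matching M₁ ⊇ M and any edge (a', b) ∈ M₁ \ M, agent a' satisfies a' ≻_b t(b) or t(b) does not exist. -/
/-- let t be the threshold agent of a resource b unmatched in M (the
b-most-preferred agent matched in M that prefers b over its partner). Then in any
envy-free matching M₁ extending M, any agent a' newly matched to b satisfies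
a' ≻_b t. -/
theorem threshold_agent_bound {A B : Type*} (E : A → B → Prop)
    (prefA : A → B → B → Prop) (prefB : B → A → A → Prop) (M M₁ : Matching A B)
    (hsp : StrictPrefs E prefA prefB) (hM : M.RespectsE E) (hM₁ : M₁.RespectsE E)
    (hsub : ∀ a b, M.mA a = some b → M₁.mA a = some b)
    (hef : EnvyFree E prefA prefB M₁)
    (b : B) (hb : M.mB b = none)
    (t : A) (htE : E t b)
    (htm : ∃ bt, M.mA t = some bt ∧ prefA t b bt)
    (htmax : ∀ a'', E a'' b → (∃ b'', M.mA a'' = some b'' ∧ prefA a'' b b'') →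
      a'' = t ∨ prefB b t a'')
    (a' : A) (ha' : M₁.mA a' = some b) (hnew : M.mA a' ≠ some b) :
    prefB b a' t := by
  obtain ⟨bt, hbt, hpref⟩ := htm
  have hE' : E a' b := hM₁ a' b ha'
  have hne : a' ≠ t := by
    rintro rfl
    have := hsub a' bt hbt
    rw [ha'] at this
    obtain rfl := Option.some.inj this
    exact hsp.irreflA a' b hpref
  rcases hsp.totalB b a' t hE' htE hne with h | h
  · exact h
  · exfalso
    apply hef t a'
    refine ⟨b, ha', htE, ?_, h⟩
    have h1 := hsub t bt hbt
    rw [h1]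
    exact hpref
end
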